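/- Let x = (x_1,...,x_{r+1}) ∈ ℝ^{r+1} have exactly s distinct coordinate values, attained at positions organized as x_1 = ... = x_{a_1 - 1} < x_{a_1} = ... = x_{a_2 - 1} < ... < x_{a_{s-1}} = ... = x_{r+1}. Then the columns of the Jacobi matrix of the elementary-symmetric map E at x with indices 1, a_1, ..., a_{s-1} are linearly independent, so the differential of E at x has rank exactly s. -/

import Mathlib

open Finset

/-- The Jacobi matrix of the elementary symmetric polynomial map
`E(x) = (e₁(x), …, e_{r+1}(x))`: its `(a,b)` entry is
`∂e_(a+1)/∂x_b = e_a(x₁,…,x̂_b,…,x_{r+1})`. -/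
noncomputable def jacobiEsymm (r : ℕ) (x : Fin (r + 1) → ℝ) :
    Matrix (Fin (r + 1)) (Fin (r + 1)) ℝ :=
  fun a b => ∑ s ∈ Finset.powersetCard a.val (Finset.univ.erase b), ∏ k ∈ s, x k


open Polynomial in
lemma coeff_prod_linear {ι : Type*} [DecidableEq ι] (t : Finset ι) (x : ι → ℝ) (k : ℕ) :
    (∏ i ∈ t, (C (x i) * X + 1)).coeff k
      = ∑ S ∈ Finset.powersetCard k t, ∏ i ∈ S, x i := by
  rw [Finset.prod_add, Polynomial.finset_sum_coeff]
  have h1 : ∀ S : Finset ι, (∏ i ∈ S, (C (x i) * X)) = C (∏ i ∈ S, x i) * X ^ S.card := by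
    intro S
    rw [Finset.prod_mul_distrib, Finset.prod_const, ← map_prod]
  simp only [h1, Finset.prod_const_one, mul_one, Polynomial.coeff_C_mul,
    Polynomial.coeff_X_pow]
  rw [Finset.powersetCard_eq_filter, Finset.sum_filter]
  apply Finset.sum_congr rfl
  intro S _
  by_cases h : S.card = k
  · simp [h]
  · simp [h, show k ≠ S.card from fun hk => h hk.symm]

/-- The polynomial whose coefficients form column `b` of the Jacobi matrix. -/
noncomputable def jacobiCol (r : ℕ) (x : Fin (r + 1) → ℝ) (b : Fin (r + 1)) : Polynomial ℝ :=
  ∏ i ∈ Finset.univ.erase b, (Polynomial.C (x i) * Polynomial.X + 1)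

lemma jacobiCol_coeff (r : ℕ) (x : Fin (r + 1) → ℝ) (b : Fin (r + 1)) (row : Fin (r + 1)) :
    (jacobiCol r x b).coeff row.val = jacobiEsymm r x row b :=
  coeff_prod_linear _ _ _

lemma jacobiCol_coeff_zero (r : ℕ) (x : Fin (r + 1) → ℝ) (b : Fin (r + 1)) {k : ℕ}
    (hk : r < k) : (jacobiCol r x b).coeff k = 0 := by
  rw [jacobiCol, coeff_prod_linear]
  have hcard : (Finset.univ.erase b).card = r := by
    rw [Finset.card_erase_of_mem (Finset.mem_univ b), Finset.card_univ, Fintype.card_fin]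
    rfl
  rw [Finset.powersetCard_eq_empty.mpr (by omega), Finset.sum_empty]

open Polynomial in
lemma jacobiCol_mul (r : ℕ) (x : Fin (r + 1) → ℝ) (b : Fin (r + 1)) :
    jacobiCol r x b * (C (x b) * X + 1) = ∏ i, (C (x i) * X + 1) := by
  rw [jacobiCol, mul_comm]
  exact Finset.mul_prod_erase Finset.univ (fun i => (C (x i) * X + 1)) (Finset.mem_univ b)

open Polynomial in
lemma linfac_ne_zero (u : ℝ) : (C u * X + 1 : Polynomial ℝ) ≠ 0 := fun h => by
  simpa using congrArg (Polynomial.eval 0) h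

open Polynomial in
lemma jacobiCol_eq_of_eq (r : ℕ) (x : Fin (r + 1) → ℝ) {b b' : Fin (r + 1)}
    (h : x b = x b') : ∀ row, jacobiEsymm r x row b = jacobiEsymm r x row b' := by
  have hcol : jacobiCol r x b = jacobiCol r x b' := by
    apply mul_right_cancel₀ (linfac_ne_zero (x b))
    rw [jacobiCol_mul]
    nth_rewrite 1 [h]
    rw [jacobiCol_mul]
  intro row
  rw [← jacobiCol_coeff, ← jacobiCol_coeff, hcol]


/-- Let `x₁ ≤ ⋯ ≤ x_{r+1}` take exactly `s` distinct values, the blocks of equal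
coordinates starting at positions `a 0 = 1 < a 1 < ⋯ < a (s-1)` (zero-indexed:
`a 0 = 0`). Then the columns of the Jacobi matrix of the elementary symmetric
map `E` at `x` with indices `a 0, a 1, …, a (s-1)` are linearly independent, and
the differential of `E` at `x` has rank exactly `s`. -/
theorem jacobiEsymm_rank_eq (r s : ℕ) (hs : 1 ≤ s) (x : Fin (r + 1) → ℝ)
    (hx : Monotone x)
    (a : Fin s → Fin (r + 1)) (ha : StrictMono a) (ha0 : a ⟨0, hs⟩ = 0)
    (hblock : ∀ b : Fin (r + 1), ∀ i : Fin s, a i ≤ b →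
      (∀ j : Fin s, a j ≤ b → a j ≤ a i) → x b = x (a i))
    (hjump : StrictMono (fun i : Fin s => x (a i))) :
    LinearIndependent ℝ
        (fun i : Fin s => (fun row : Fin (r + 1) => jacobiEsymm r x row (a i))) ∧
      (jacobiEsymm r x).rank = s := by
  classical
  have tinj : Function.Injective (fun i : Fin s => x (a i)) := hjump.injective
  -- every column equals one of the chosen columns
  have colblock : ∀ b : Fin (r + 1), ∃ i : Fin s,
      ∀ row, jacobiEsymm r x row b = jacobiEsymm r x row (a i) := by
    intro b
    have hne : (Finset.univ.filter (fun j : Fin s => a j ≤ b)).Nonempty :=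
      ⟨⟨0, hs⟩, by simp [ha0, Fin.zero_le]⟩
    set i := (Finset.univ.filter (fun j : Fin s => a j ≤ b)).max' hne with hi
    have hib : a i ≤ b :=
      (Finset.mem_filter.mp ((Finset.univ.filter (fun j : Fin s => a j ≤ b)).max'_mem hne)).2
    have hmax : ∀ j : Fin s, a j ≤ b → a j ≤ a i := fun j hj =>
      ha.monotone (Finset.le_max' _ j (Finset.mem_filter.mpr ⟨Finset.mem_univ _, hj⟩))
    exact ⟨i, jacobiCol_eq_of_eq r x (hblock b i hib hmax)⟩
  have hli : LinearIndependent ℝ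
      (fun i : Fin s => (fun row : Fin (r + 1) => jacobiEsymm r x row (a i))) := by
    rw [Fintype.linearIndependent_iff]
    intro c hc
    -- polynomial linear combination vanishes
    have hQ : (∑ i, Polynomial.C (c i) * jacobiCol r x (a i)) = 0 := by
      ext k
      rw [Polynomial.finset_sum_coeff]
      simp only [Polynomial.coeff_C_mul, Polynomial.coeff_zero]
      by_cases hk : k ≤ r
      · have h := congrFun hc ⟨k, Nat.lt_succ_of_le hk⟩
        simp only [Finset.sum_apply, Pi.smul_apply, smul_eq_mul, Pi.zero_apply] at h
        simpa [jacobiCol_coeff r x _ ⟨k, Nat.lt_succ_of_le hk⟩] using h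
      · simp [jacobiCol_coeff_zero r x _ (not_le.mp hk)]
    -- multiply by the full product of the distinct linear factors
    have hS : (∑ i : Fin s, Polynomial.C (c i) *
        ∏ j ∈ Finset.univ.erase i, (Polynomial.C (x (a j)) * Polynomial.X + 1)) = 0 := by
      have h2 : (∑ i, Polynomial.C (c i) * jacobiCol r x (a i)) *
          (∏ j : Fin s, (Polynomial.C (x (a j)) * Polynomial.X + 1)) = 0 := by
        rw [hQ, zero_mul]
      rw [Finset.sum_mul] at h2
      have h3 : ∀ i : Fin s, (Polynomial.C (c i) * jacobiCol r x (a i)) *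
          (∏ j : Fin s, (Polynomial.C (x (a j)) * Polynomial.X + 1))
          = (∏ i' : Fin (r + 1), (Polynomial.C (x i') * Polynomial.X + 1)) *
            (Polynomial.C (c i) *
              ∏ j ∈ Finset.univ.erase i, (Polynomial.C (x (a j)) * Polynomial.X + 1)) := by
        intro i
        rw [← Finset.mul_prod_erase (Finset.univ : Finset (Fin s))
          (fun j => (Polynomial.C (x (a j)) * Polynomial.X + 1)) (Finset.mem_univ i)]
        have := jacobiCol_mul r x (a i)
        calc (Polynomial.C (c i) * jacobiCol r x (a i)) *
              ((Polynomial.C (x (a i)) * Polynomial.X + 1) *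
                ∏ j ∈ Finset.univ.erase i, (Polynomial.C (x (a j)) * Polynomial.X + 1))
            = (jacobiCol r x (a i) * (Polynomial.C (x (a i)) * Polynomial.X + 1)) *
              (Polynomial.C (c i) *
                ∏ j ∈ Finset.univ.erase i, (Polynomial.C (x (a j)) * Polynomial.X + 1)) := by
              ring
          _ = _ := by rw [this]
      simp only [h3] at h2
      rw [← Finset.mul_sum] at h2
      have hfull : (∏ i' : Fin (r + 1), (Polynomial.C (x i') * Polynomial.X + 1)) ≠ 0 :=
        Finset.prod_ne_zero_iff.mpr fun i' _ => linfac_ne_zero (x i')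
      exact (mul_eq_zero.mp h2).resolve_left hfull
    -- evaluate
    have heval : ∀ z : ℝ, ∑ i : Fin s,
        c i * ∏ j ∈ Finset.univ.erase i, (x (a j) * z + 1) = 0 := by
      intro z
      have h := congrArg (Polynomial.eval z) hS
      simpa [Polynomial.eval_finset_sum, Polynomial.eval_prod] using h
    have key : ∀ i : Fin s, x (a i) ≠ 0 → c i = 0 := by
      intro i hi
      have h := heval (-(x (a i))⁻¹)
      rw [Finset.sum_eq_single_of_mem i (Finset.mem_univ i) ?other] at h
      · have hprod : ∏ j ∈ Finset.univ.erase i, (x (a j) * (-(x (a i))⁻¹) + 1) ≠ 0 := by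
          apply Finset.prod_ne_zero_iff.mpr
          intro j hj
          have hji : x (a j) ≠ x (a i) := fun e => (Finset.mem_erase.mp hj).1 (tinj e)
          intro h0
          apply hji
          field_simp at h0
          linarith
        exact (mul_eq_zero.mp h).resolve_right hprod
      · intro i' _ hne
        have hz : x (a i) * (-(x (a i))⁻¹) + 1 = 0 := by field_simp; norm_num
        rw [Finset.prod_eq_zero (Finset.mem_erase.mpr ⟨Ne.symm hne, Finset.mem_univ i⟩) hz,
          mul_zero]
    intro i
    by_cases hi : x (a i) = 0
    · have h := heval 0
      simp only [mul_zero, zero_add, Finset.prod_const_one, mul_one] at h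
      have hothers : ∀ i' ∈ Finset.univ, i' ≠ i → c i' = 0 := by
        intro i' _ hne
        exact key i' fun e => hne (tinj (e.trans hi.symm))
      rwa [Finset.sum_eq_single_of_mem i (Finset.mem_univ i) hothers] at h
    · exact key i hi
  refine ⟨hli, ?_⟩
  rw [Matrix.rank_eq_finrank_span_cols]
  have hrange : Set.range (jacobiEsymm r x).transpose =
      Set.range (fun i : Fin s => (fun row : Fin (r + 1) => jacobiEsymm r x row (a i))) := by
    apply Set.Subset.antisymm
    · rintro _ ⟨b, rfl⟩
      obtain ⟨i, hi⟩ := colblock b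
      exact ⟨i, by funext row; exact (hi row).symm⟩
    · rintro _ ⟨i, rfl⟩
      exact ⟨a i, rfl⟩
  rw [show Set.range (jacobiEsymm r x).col = Set.range (jacobiEsymm r x).transpose from rfl,
    hrange, finrank_span_eq_card hli, Fintype.card_fin]
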